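/- Let G and H be gibonacci sequences and set e_G = G(0)² − G(1)² + G(0)·G(1). Then for all integers k and r: H(k+r−2)·G(k−1)·G(k+1)·G(k+2) + G(k−2)·H(k+r−1)·G(k+1)·G(k+2) + G(k−2)·G(k−1)·H(k+r+1)·G(k+2) + G(k−2)·G(k−1)·G(k+1)·H(k+r+2) = 4·H(k+r)·G(k)³ − 2·e_G·G(0)·(H(r+2) + H(r)) + 2·e_G·G(1)·(H(r+1) + H(r−1)). -/

import Mathlib

/-- Auxiliary quantity: `E j = e_j * D_j` which turns out to be independent of `j`. -/
def auxE (G H : ℤ → ℝ) (r j : ℤ) : ℝ :=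
  (G (j-1)^2 + G (j-1) * G j - G j^2) *
    ((G (j-2) + G j) * H (j+r) - (G (j-1) + G (j+1)) * H (j+r-1))

lemma auxE_step (G H : ℤ → ℝ)
    (hG : ∀ n : ℤ, G n = G (n - 1) + G (n - 2))
    (hH : ∀ n : ℤ, H n = H (n - 1) + H (n - 2))
    (r m : ℤ) : auxE G H r (m+1) = auxE G H r m := by
  unfold auxE
  rw [show m+1-1 = m from by ring, show m+1-2 = m-1 from by ring,
      show m+1+1 = m+2 from by ring, show m+1+r = m+r+1 from by ring,
      show m+r+1-1 = m+r from by ring]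
  have h2 : G (m+2) = G (m+1) + G m := by
    have h := hG (m+2)
    rw [show m+2-1 = m+1 from by ring, show m+2-2 = m from by ring] at h
    exact h
  have h1 : G (m+1) = G m + G (m-1) := by
    have h := hG (m+1)
    rw [show m+1-1 = m from by ring, show m+1-2 = m-1 from by ring] at h
    exact h
  have h0 : G (m-2) = G m - G (m-1) := by
    have h := hG m; linarith
  have hh : H (m+r+1) = H (m+r) + H (m+r-1) := by
    have h := hH (m+r+1)
    rw [show m+r+1-1 = m+r from by ring, show m+r+1-2 = m+r-1 from by ring] at h
    exact h
  rw [h2, h1, h0, hh]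
  ring

lemma auxE_const (G H : ℤ → ℝ)
    (hG : ∀ n : ℤ, G n = G (n - 1) + G (n - 2))
    (hH : ∀ n : ℤ, H n = H (n - 1) + H (n - 2))
    (r : ℤ) : ∀ k : ℤ, auxE G H r k = auxE G H r 0 := by
  intro k
  induction k using Int.induction_on with
  | zero => rfl
  | succ i ih => rw [auxE_step G H hG hH r i]; exact ih
  | pred i ih =>
      have h := auxE_step G H hG hH r (-i-1)
      rw [show (-(i:ℤ)-1+1) = -(i:ℤ) from by ring] at h
      rw [← h]; exact ih

/-- a generalization of the Gelin–Cesàro identity to two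
gibonacci sequences. -/
theorem statement19 (G H : ℤ → ℝ)
    (hG : ∀ n : ℤ, G n = G (n - 1) + G (n - 2))
    (hH : ∀ n : ℤ, H n = H (n - 1) + H (n - 2))
    (eG : ℝ) (heG : eG = G 0 ^ 2 - G 1 ^ 2 + G 0 * G 1)
    (k r : ℤ) :
    H (k + r - 2) * G (k - 1) * G (k + 1) * G (k + 2)
      + G (k - 2) * H (k + r - 1) * G (k + 1) * G (k + 2)
      + G (k - 2) * G (k - 1) * H (k + r + 1) * G (k + 2)
      + G (k - 2) * G (k - 1) * G (k + 1) * H (k + r + 2) =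
    4 * H (k + r) * G k ^ 3 - 2 * eG * G 0 * (H (r + 2) + H r)
      + 2 * eG * G 1 * (H (r + 1) + H (r - 1)) := by
  have key := auxE_const G H hG hH r k
  unfold auxE at key
  norm_num at key
  have e1 : G (k+2) = G (k+1) + G k := by
    have h := hG (k+2)
    rw [show k+2-1 = k+1 from by ring, show k+2-2 = k from by ring] at h
    exact h
  have e2 : G (k+1) = G k + G (k-1) := by
    have h := hG (k+1)
    rw [show k+1-1 = k from by ring, show k+1-2 = k-1 from by ring] at h
    exact h
  have e3 : G (k-2) = G k - G (k-1) := by have h := hG k; linarith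
  have e4 : H (k+r+2) = H (k+r+1) + H (k+r) := by
    have h := hH (k+r+2)
    rw [show k+r+2-1 = k+r+1 from by ring, show k+r+2-2 = k+r from by ring] at h
    exact h
  have e5 : H (k+r+1) = H (k+r) + H (k+r-1) := by
    have h := hH (k+r+1)
    rw [show k+r+1-1 = k+r from by ring, show k+r+1-2 = k+r-1 from by ring] at h
    exact h
  have e6 : H (k+r-2) = H (k+r) - H (k+r-1) := by have h := hH (k+r); linarith
  have e7 : H (r+2) = H (r+1) + H r := by
    have h := hH (r+2)
    rw [show r+2-1 = r+1 from by ring, show r+2-2 = r from by ring] at h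
    exact h
  have e8 : H (r+1) = H r + H (r-1) := by
    have h := hH (r+1)
    rw [show r+1-1 = r from by ring, show r+1-2 = r-1 from by ring] at h
    exact h
  have e9 : G (-2) = G 0 - G (-1) := by
    have h := hG 0; norm_num at h; linarith
  have e10 : G (-1) = G 1 - G 0 := by
    have h := hG 1; norm_num at h; linarith
  rw [e3, e2, e9, e10] at key
  rw [e6, e1, e2, e3, e4, e5, e7, e8, heG]
  linear_combination 2 * key
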